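/- For f ∈ BV[−π,π], the Fourier coefficients a_n(f) = (1/π)∫_{−π}^{π} f(t) cos(nt) dt and b_n(f) = (1/π)∫_{−π}^{π} f(t) sin(nt) dt satisfy |a_n(f)| ≤ 2V/(πn) and |b_n(f)| ≤ 2V/(πn) for all n ≥ 1, where V = V_{−π}^{π}(f). -/

import Mathlib

open Set Filter Topology MeasureTheory Real

theorem fourier_bv_key (f : ℝ → ℝ) (hper : Function.Periodic f (2 * π))
    (hbv : BoundedVariationOn f (Set.Icc (-π) π))
    (c : ℝ → ℝ) (hc : Continuous c) (hc1 : ∀ x, |c x| ≤ 1)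
    (hfc : Function.Periodic (fun t => f t * c t) (2 * π))
    {h : ℝ} (hh0 : 0 < h) (hhπ : h ≤ π)
    (hcs : ∀ x, c (x + h) = -c x) :
    |∫ t in (-π)..π, f t * c t| ≤
      h * (eVariationOn f (Set.Icc (-π) π)).toReal / 2 := by
  have hπ0 : (0:ℝ) < π := Real.pi_pos
  have lbv : LocallyBoundedVariationOn f (Icc (-π) π) := hbv.locallyBoundedVariationOn
  set p : ℝ → ℝ := variationOnFromTo f (Icc (-π) π) (-π) with hp_def
  have hmπ : -π ∈ Icc (-π) π := ⟨le_refl _, by linarith⟩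
  have hpmono : MonotoneOn p (Icc (-π) π) := variationOnFromTo.monotoneOn lbv hmπ
  have huIcc : uIcc (-π) π = Icc (-π) π := uIcc_of_le (by linarith)
  -- distance bound via variation
  have hdist : ∀ {x y : ℝ}, x ∈ Icc (-π) π → y ∈ Icc (-π) π → x ≤ y →
      |f x - f y| ≤ p y - p x := by
    intro x y hx hy hxy
    have h1 : p y - p x = variationOnFromTo f (Icc (-π) π) x y := by
      rw [hp_def, ← variationOnFromTo.add lbv hmπ hx hy]; ring
    rw [h1, variationOnFromTo.eq_of_le f _ hxy]
    have h2 : edist (f x) (f y) ≤ eVariationOn f (Icc (-π) π ∩ Icc x y) :=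
      eVariationOn.edist_le f ⟨hx, le_rfl, hxy⟩ ⟨hy, hxy, le_rfl⟩
    have h3 : eVariationOn f (Icc (-π) π ∩ Icc x y) ≠ ⊤ :=
      ne_top_of_le_ne_top hbv (eVariationOn.mono f inter_subset_left)
    rw [← Real.dist_eq, dist_edist]
    exact ENNReal.toReal_mono h3 h2
  -- integrability of p and f
  have hpint : IntervalIntegrable p volume (-π) π := by
    apply MonotoneOn.intervalIntegrable; rwa [huIcc]
  have hqmono : MonotoneOn (p - f) (Icc (-π) π) :=
    variationOnFromTo.sub_self_monotoneOn lbv hmπ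
  have hfint : IntervalIntegrable f volume (-π) π := by
    have h2 : IntervalIntegrable (p - f) volume (-π) π := by
      apply MonotoneOn.intervalIntegrable; rwa [huIcc]
    have h3 := hpint.sub h2
    simpa using h3
  have hIsub : ∀ g : ℝ → ℝ, IntervalIntegrable g volume (-π) π → ∀ {a b : ℝ},
      a ∈ Icc (-π) π → b ∈ Icc (-π) π → IntervalIntegrable g volume a b := by
    intro g hg a b ha hb
    exact hg.mono_set (uIcc_subset_uIcc (by rwa [huIcc]) (by rwa [huIcc]))
  -- f integrable on [π, π+h]
  have hf2 : IntervalIntegrable f volume π (π + h) := by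
    have h1 := (hIsub f hfint ⟨le_rfl, by linarith⟩ ⟨by linarith, by linarith⟩ :
      IntervalIntegrable f volume (-π) (-π + h)).comp_sub_right (2*π)
    have h2 : (fun x : ℝ => f (x - 2*π)) = f := funext fun x => hper.sub_eq x
    rw [h2, show -π + 2*π = π by ring, show (-π + h) + 2*π = π + h by ring] at h1
    exact h1
  have hfh : IntervalIntegrable (fun t => f (t + h)) volume (-π) π := by
    have h3 : IntervalIntegrable f volume (-π + h) (π + h) :=
      (hIsub f hfint ⟨by linarith, by linarith⟩ ⟨by linarith, le_rfl⟩).trans hf2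
    have h4 := h3.comp_add_right h
    rw [show -π + h - h = -π by ring, show π + h - h = π by ring] at h4
    exact h4
  -- Step A : translated integral is the negative
  have hA : (∫ t in (-π)..π, f (t + h) * c t) = -∫ t in (-π)..π, f t * c t := by
    calc ∫ t in (-π)..π, f (t + h) * c t
        = ∫ t in (-π)..π, -(f (t + h) * c (t + h)) := by
          apply intervalIntegral.integral_congr; intro t _
          show f (t + h) * c t = -(f (t + h) * c (t + h))
          rw [hcs t]; ring
      _ = -∫ t in (-π)..π, f (t + h) * c (t + h) := intervalIntegral.integral_neg
      _ = -∫ u in (-π + h)..(π + h), f u * c u :=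
          congrArg Neg.neg (intervalIntegral.integral_comp_add_right (fun u => f u * c u) h)
      _ = -∫ u in (-π)..π, f u * c u := by
          have h5 := hfc.intervalIntegral_add_eq (-π + h) (-π)
          rw [show -π + h + 2*π = π + h by ring, show -π + 2*π = π by ring] at h5
          rw [h5]
  -- Step B
  have hprod : IntervalIntegrable (fun t => f t * c t) volume (-π) π :=
    hfint.mul_continuousOn hc.continuousOn
  have hprod2 : IntervalIntegrable (fun t => f (t + h) * c t) volume (-π) π :=
    hfh.mul_continuousOn hc.continuousOn
  have hB : ∫ t in (-π)..π, (f t - f (t + h)) * c t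
      = 2 * ∫ t in (-π)..π, f t * c t := by
    have h6 : ∀ t ∈ uIcc (-π) π, (f t - f (t + h)) * c t
        = f t * c t - f (t + h) * c t := fun t _ => by ring
    rw [intervalIntegral.integral_congr h6, intervalIntegral.integral_sub hprod hprod2, hA]
    ring
  -- Step C
  have hΔint : IntervalIntegrable (fun t => f t - f (t + h)) volume (-π) π := hfint.sub hfh
  have hC : |∫ t in (-π)..π, (f t - f (t + h)) * c t|
      ≤ ∫ t in (-π)..π, |f t - f (t + h)| := by
    refine (intervalIntegral.abs_integral_le_integral_abs (by linarith)).trans ?_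
    refine intervalIntegral.integral_mono_on (by linarith)
      ((hΔint.mul_continuousOn hc.continuousOn).abs) hΔint.abs ?_
    intro x _
    rw [abs_mul]
    exact mul_le_of_le_one_right (abs_nonneg _) (hc1 x)
  -- Step D : pointwise bounds
  have hpt1 : ∀ t ∈ Icc (-π) (π - h), |f t - f (t + h)| ≤ p (t + h) - p t := by
    intro t ht
    exact hdist ⟨ht.1, by linarith [ht.2]⟩ ⟨by linarith [ht.1], by linarith [ht.2]⟩
      (by linarith)
  have hfπ : f π = f (-π) := by
    have h7 := hper (-π); rw [show -π + 2*π = π by ring] at h7; exact h7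
  have hpt2 : ∀ t ∈ Icc (π - h) π,
      |f t - f (t + h)| ≤ (p π - p t) + p (t + (h - 2*π)) := by
    intro t ht
    have hft : f (t + h) = f (t + (h - 2*π)) := by
      have h8 := hper (t + (h - 2*π))
      rw [show t + (h - 2*π) + 2*π = t + h by ring] at h8
      exact h8
    rw [hft]
    have ht1 : t ∈ Icc (-π) π := ⟨by linarith [ht.1], ht.2⟩
    have ht2 : t + (h - 2*π) ∈ Icc (-π) π := ⟨by linarith [ht.1], by linarith [ht.2]⟩
    have e1 : |f t - f π| ≤ p π - p t := hdist ht1 ⟨by linarith, le_rfl⟩ ht1.2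
    have e1' : |f t - f (-π)| ≤ p π - p t := hfπ ▸ e1
    have e2 : |f (-π) - f (t + (h - 2*π))| ≤ p (t + (h - 2*π)) - p (-π) :=
      hdist hmπ ht2 ht2.1
    have hp0 : p (-π) = 0 := variationOnFromTo.self f _ (-π)
    have e3 := abs_sub_le (f t) (f (-π)) (f (t + (h - 2*π)))
    linarith
  -- integrability pieces
  have habs := hΔint.abs
  have habs1 : IntervalIntegrable (fun t => |f t - f (t + h)|) volume (-π) (π - h) := by
    have h9 : IntervalIntegrable f volume (-π + h) π :=
      hIsub f hfint ⟨by linarith, by linarith⟩ ⟨by linarith, le_rfl⟩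
    have h10 := h9.comp_add_right h
    rw [show -π + h - h = -π by ring] at h10
    exact ((hIsub f hfint ⟨le_rfl, by linarith⟩ ⟨by linarith, by linarith⟩).sub h10).abs
  have habs2 : IntervalIntegrable (fun t => |f t - f (t + h)|) volume (π - h) π := by
    have h11 : IntervalIntegrable f volume π (π + h) := hf2
    have h12 : IntervalIntegrable f volume (π - h + h) (π + h) := by
      rw [show π - h + h = π by ring]; exact h11
    have h13 := h12.comp_add_right h
    rw [show π - h + h - h = π - h by ring, show π + h - h = π by ring] at h13
    exact ((hIsub f hfint ⟨by linarith, by linarith⟩ ⟨by linarith, le_rfl⟩).sub h13).abs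
  have i1 : IntervalIntegrable (fun t => p (t + h)) volume (-π) (π - h) := by
    have h14 := (hIsub p hpint ⟨by linarith, by linarith⟩ ⟨by linarith, le_rfl⟩ :
      IntervalIntegrable p volume (-π + h) π).comp_add_right h
    rw [show -π + h - h = -π by ring] at h14
    exact h14
  have i1' : IntervalIntegrable (fun t => p (t + h) - p t) volume (-π) (π - h) :=
    i1.sub (hIsub p hpint ⟨le_rfl, by linarith⟩ ⟨by linarith, by linarith⟩)
  have i2a : IntervalIntegrable (fun t => p (t + (h - 2*π))) volume (π - h) π := by
    have h15 := (hIsub p hpint ⟨le_rfl, by linarith⟩ ⟨by linarith, by linarith⟩ :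
      IntervalIntegrable p volume (-π) (-π + h)).comp_add_right (h - 2*π)
    rw [show -π - (h - 2*π) = π - h by ring, show (-π + h) - (h - 2*π) = π by ring] at h15
    exact h15
  have i2 : IntervalIntegrable (fun t => (p π - p t) + p (t + (h - 2*π))) volume (π - h) π :=
    ((intervalIntegrable_const).sub
      (hIsub p hpint ⟨by linarith, by linarith⟩ ⟨by linarith, le_rfl⟩)).add i2a
  -- split and bound the integral of |Δ|
  have hsplit : ∫ t in (-π)..π, |f t - f (t + h)|
      = (∫ t in (-π)..(π - h), |f t - f (t + h)|)
        + ∫ t in (π - h)..π, |f t - f (t + h)| :=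
    (intervalIntegral.integral_add_adjacent_intervals habs1 habs2).symm
  have hb1 : (∫ t in (-π)..(π - h), |f t - f (t + h)|)
      ≤ ∫ t in (-π)..(π - h), (p (t + h) - p t) :=
    intervalIntegral.integral_mono_on (by linarith) habs1 i1' hpt1
  have hb2 : (∫ t in (π - h)..π, |f t - f (t + h)|)
      ≤ ∫ t in (π - h)..π, ((p π - p t) + p (t + (h - 2*π))) :=
    intervalIntegral.integral_mono_on (by linarith) habs2 i2 hpt2
  -- compute the RHS integrals
  have hc1' : (∫ t in (-π)..(π - h), (p (t + h) - p t))
      = (∫ u in (-π + h)..π, p u) - ∫ t in (-π)..(π - h), p t := by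
    rw [intervalIntegral.integral_sub i1
      (hIsub p hpint ⟨le_rfl, by linarith⟩ ⟨by linarith, by linarith⟩)]
    congr 1
    have h16 := intervalIntegral.integral_comp_add_right (a := -π) (b := π - h) p h
    rw [show π - h + h = π by ring] at h16
    exact h16
  have hc2' : (∫ t in (π - h)..π, ((p π - p t) + p (t + (h - 2*π))))
      = (h * p π - ∫ t in (π - h)..π, p t) + ∫ u in (-π)..(-π + h), p u := by
    rw [intervalIntegral.integral_add
      ((intervalIntegrable_const).sub
        (hIsub p hpint ⟨by linarith, by linarith⟩ ⟨by linarith, le_rfl⟩)) i2a]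
    congr 1
    · rw [intervalIntegral.integral_sub intervalIntegrable_const
        (hIsub p hpint ⟨by linarith, by linarith⟩ ⟨by linarith, le_rfl⟩)]
      rw [intervalIntegral.integral_const]
      rw [show π - (π - h) = h by ring, smul_eq_mul]
    · have h17 := intervalIntegral.integral_comp_add_right (a := π - h) (b := π) p (h - 2*π)
      rw [show π - h + (h - 2*π) = -π by ring, show π + (h - 2*π) = -π + h by ring] at h17
      exact h17
  -- the telescoping identity
  have hadj1 : (∫ t in (-π)..(π - h), p t) + ∫ t in (π - h)..π, p t = ∫ t in (-π)..π, p t :=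
    intervalIntegral.integral_add_adjacent_intervals
      (hIsub p hpint ⟨le_rfl, by linarith⟩ ⟨by linarith, by linarith⟩)
      (hIsub p hpint ⟨by linarith, by linarith⟩ ⟨by linarith, le_rfl⟩)
  have hadj2 : (∫ t in (-π)..(-π + h), p t) + ∫ t in (-π + h)..π, p t = ∫ t in (-π)..π, p t :=
    intervalIntegral.integral_add_adjacent_intervals
      (hIsub p hpint ⟨le_rfl, by linarith⟩ ⟨by linarith, by linarith⟩)
      (hIsub p hpint ⟨by linarith, by linarith⟩ ⟨by linarith, le_rfl⟩)
  have hpV : p π = (eVariationOn f (Set.Icc (-π) π)).toReal := by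
    rw [hp_def, variationOnFromTo.eq_of_le f _ (by linarith : -π ≤ π), inter_self]
  -- put it together
  have hD : (∫ t in (-π)..π, |f t - f (t + h)|)
      ≤ h * (eVariationOn f (Set.Icc (-π) π)).toReal := by
    rw [hsplit, ← hpV]
    linarith [hb1, hb2, hc1', hc2']
  have hfinal : |2 * ∫ t in (-π)..π, f t * c t|
      ≤ h * (eVariationOn f (Set.Icc (-π) π)).toReal := by
    rw [← hB]; exact hC.trans hD
  rw [abs_mul, abs_two] at hfinal
  linarith [abs_nonneg (∫ t in (-π)..π, f t * c t)]

/-- For a `2π`-periodic function `f` of bounded variation on `[−π,π]` with total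
variation `V`, the Fourier coefficients satisfy `|a_n(f)| ≤ 2V/(πn)` and
`|b_n(f)| ≤ 2V/(πn)` for `n ≥ 1`. -/
theorem fourier_coeff_bound_of_bv
    (f : ℝ → ℝ) (hper : Function.Periodic f (2 * Real.pi))
    (hbv : BoundedVariationOn f (Set.Icc (-Real.pi) Real.pi))
    (n : ℕ) (hn : 1 ≤ n) :
    |(1 / Real.pi) * ∫ t in (-Real.pi)..Real.pi, f t * Real.cos (n * t)| ≤
      2 * (eVariationOn f (Set.Icc (-Real.pi) Real.pi)).toReal / (Real.pi * n) ∧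
    |(1 / Real.pi) * ∫ t in (-Real.pi)..Real.pi, f t * Real.sin (n * t)| ≤
      2 * (eVariationOn f (Set.Icc (-Real.pi) Real.pi)).toReal / (Real.pi * n) := by
  have hπ0 : (0:ℝ) < π := Real.pi_pos
  have hn0 : (0:ℝ) < (n:ℝ) := by exact_mod_cast hn
  have hn1 : (1:ℝ) ≤ (n:ℝ) := by exact_mod_cast hn
  set V := (eVariationOn f (Set.Icc (-Real.pi) Real.pi)).toReal with hV
  have hV0 : 0 ≤ V := ENNReal.toReal_nonneg
  have hh0 : 0 < π / n := div_pos hπ0 hn0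
  have hhπ : π / n ≤ π := div_le_self hπ0.le hn1
  have hnh : (n:ℝ) * (π / n) = π := by field_simp
  have final : ∀ I : ℝ, |I| ≤ π / n * V / 2 → |(1 / Real.pi) * I| ≤ 2 * V / (π * n) := by
    intro I hI
    rw [abs_mul, abs_of_pos (by positivity : (0:ℝ) < 1 / Real.pi)]
    have h2 : 1/π * |I| ≤ 1/π * (π/n * V / 2) := mul_le_mul_of_nonneg_left hI (by positivity)
    have h3 : 1/π * (π/n * V / 2) = V / (2*n) := by
      field_simp
    have h4 : V / (2*n) ≤ 2*V/(π*n) := by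
      rw [div_le_div_iff₀ (by positivity) (by positivity)]
      nlinarith [mul_le_mul_of_nonneg_right
        (mul_le_mul_of_nonneg_left Real.pi_le_four hV0) hn0.le]
    rw [h3] at h2
    exact h2.trans h4
  constructor
  · refine final _ (fourier_bv_key f hper hbv (fun t => Real.cos (n * t))
      (Real.continuous_cos.comp (continuous_const.mul continuous_id))
      (fun x => Real.abs_cos_le_one _) ?_ hh0 hhπ ?_)
    · intro x
      show f (x + 2*π) * Real.cos (n * (x + 2*π)) = f x * Real.cos (n * x)
      rw [hper x, show (n:ℝ) * (x + 2*π) = n*x + n*(2*π) by ring,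
        Real.cos_add_nat_mul_two_pi]
    · intro x
      show Real.cos (n * (x + π/n)) = -Real.cos (n * x)
      rw [show (n:ℝ) * (x + π/n) = n*x + π by rw [mul_add, hnh]]
      exact Real.cos_add_pi _
  · refine final _ (fourier_bv_key f hper hbv (fun t => Real.sin (n * t))
      (Real.continuous_sin.comp (continuous_const.mul continuous_id))
      (fun x => Real.abs_sin_le_one _) ?_ hh0 hhπ ?_)
    · intro x
      show f (x + 2*π) * Real.sin (n * (x + 2*π)) = f x * Real.sin (n * x)
      rw [hper x, show (n:ℝ) * (x + 2*π) = n*x + n*(2*π) by ring,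
        Real.sin_add_nat_mul_two_pi]
    · intro x
      show Real.sin (n * (x + π/n)) = -Real.sin (n * x)
      rw [show (n:ℝ) * (x + π/n) = n*x + π by rw [mul_add, hnh]]
      exact Real.sin_add_pi _
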